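/- The image of φ equals the affine variety V = {(a₁, a₂, a₃, u₁, u₂, u₃) ∈ ℂ⁶ | a₁² + a₂² + a₃² = u₁² + u₂² + u₃² and a₁u₁ + a₂u₂ + a₃u₃ = 0}. -/

import Mathlib

open Matrix Complex

noncomputable section

/-- The matrix of σ(x₁, x₂, y₁, y₂) = (y₁, y₂, x₁, x₂) in coordinates (x₁, x₂, y₁, y₂). -/
def sigmaM : Matrix (Fin 4) (Fin 4) ℂ :=
  !![0, 0, 1, 0; 0, 0, 0, 1; 1, 0, 0, 0; 0, 1, 0, 0]

/-- The matrix of τ(x₁, x₂, y₁, y₂) = (−x₁, −x₂, y₁, y₂). -/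
def tauM : Matrix (Fin 4) (Fin 4) ℂ :=
  !![-1, 0, 0, 0; 0, -1, 0, 0; 0, 0, 1, 0; 0, 0, 0, 1]

lemma sigmaM_mul_sigmaM : sigmaM * sigmaM = 1 := by
  ext i j
  fin_cases i <;> fin_cases j <;>
    simp [sigmaM, Matrix.mul_apply, Fin.sum_univ_four, Matrix.one_apply, Matrix.vecHead, Matrix.vecTail]

lemma tauM_mul_tauM : tauM * tauM = 1 := by
  ext i j
  fin_cases i <;> fin_cases j <;>
    simp [tauM, Matrix.mul_apply, Fin.sum_univ_four, Matrix.one_apply, Matrix.vecHead, Matrix.vecTail]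

/-- σ as an invertible matrix. -/
def sigmaU : (Matrix (Fin 4) (Fin 4) ℂ)ˣ :=
  ⟨sigmaM, sigmaM, sigmaM_mul_sigmaM, sigmaM_mul_sigmaM⟩

/-- τ as an invertible matrix. -/
def tauU : (Matrix (Fin 4) (Fin 4) ℂ)ˣ :=
  ⟨tauM, tauM, tauM_mul_tauM, tauM_mul_tauM⟩

/-- The subgroup H of GL₄(ℂ) generated by σ and τ. -/
def Hgrp : Subgroup (Matrix (Fin 4) (Fin 4) ℂ)ˣ :=
  Subgroup.closure {sigmaU, tauU}

/-- The map φ(x₁, x₂, y₁, y₂) = (a₁, a₂, a₃, u₁, u₂, u₃), where a point of ℂ⁴ is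
a function `p : Fin 4 → ℂ` with x₁ = p 0, x₂ = p 1, y₁ = p 2, y₂ = p 3. -/
def phi (p : Fin 4 → ℂ) : (Fin 3 → ℂ) × (Fin 3 → ℂ) :=
  (![-I * (p 0 ^ 2 + p 2 ^ 2 + p 1 ^ 2 + p 3 ^ 2) / 2,
     (p 0 ^ 2 + p 2 ^ 2 - p 1 ^ 2 - p 3 ^ 2) / 2,
     p 0 * p 1 + p 2 * p 3],
   ![p 0 * p 2 + p 1 * p 3,
     I * (p 0 * p 2 - p 1 * p 3),
     I * (p 0 * p 3 + p 1 * p 2)])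

/-- The involution ν(a, u) = (a, −u). -/
def nuMap (v : (Fin 3 → ℂ) × (Fin 3 → ℂ)) : (Fin 3 → ℂ) × (Fin 3 → ℂ) := (v.1, -v.2)

lemma null_param (c1 c2 c3 : ℂ) (h : c1^2 + c2^2 + c3^2 = 0) :
    ∃ p1 p2 : ℂ, p1^2 = I*c1 + c2 ∧ p2^2 = I*c1 - c2 ∧ p1*p2 = c3 := by
  obtain ⟨p1, hp1⟩ := IsAlgClosed.exists_pow_nat_eq (I*c1 + c2) (n := 2) (by norm_num)
  by_cases h0 : p1 = 0
  · have hc : I*c1 + c2 = 0 := by rw [← hp1, h0]; ring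
    have hc3 : c3 = 0 := by
      have : c3^2 = 0 := by
        linear_combination h + (I*c1 - c2) * hc - c1^2 * Complex.I_sq
      exact pow_eq_zero_iff (by norm_num) |>.mp this
    obtain ⟨p2, hp2⟩ := IsAlgClosed.exists_pow_nat_eq (I*c1 - c2) (n := 2) (by norm_num)
    exact ⟨p1, p2, hp1, hp2, by rw [h0, hc3]; ring⟩
  · refine ⟨p1, c3/p1, hp1, ?_, by field_simp⟩
    have hne : I*c1 + c2 ≠ 0 := by rw [← hp1]; exact pow_ne_zero _ h0
    field_simp [hp1]
    linear_combination h - c1^2 * Complex.I_sq - (I*c1 - c2) * hp1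

theorem stmt15 :
    Set.range phi =
      {v : (Fin 3 → ℂ) × (Fin 3 → ℂ) |
        v.1 0 ^ 2 + v.1 1 ^ 2 + v.1 2 ^ 2 = v.2 0 ^ 2 + v.2 1 ^ 2 + v.2 2 ^ 2 ∧
        v.1 0 * v.2 0 + v.1 1 * v.2 1 + v.1 2 * v.2 2 = 0} := by
  ext v
  constructor
  · rintro ⟨p, rfl⟩
    constructor
    · simp only [phi, Matrix.cons_val_zero, Matrix.cons_val_one, Matrix.head_cons,
        Matrix.cons_val_two, Matrix.tail_cons]
      linear_combination (((p 0 ^ 2 + p 2 ^ 2 + p 1 ^ 2 + p 3 ^ 2)/2)^2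
        - (p 0 * p 2 - p 1 * p 3)^2 - (p 0 * p 3 + p 1 * p 2)^2) * Complex.I_sq
    · simp only [phi, Matrix.cons_val_zero, Matrix.cons_val_one, Matrix.head_cons,
        Matrix.cons_val_two, Matrix.tail_cons]
      ring
  · rintro ⟨h1, h2⟩
    set a1 := v.1 0; set a2 := v.1 1; set a3 := v.1 2
    set u1 := v.2 0; set u2 := v.2 1; set u3 := v.2 2
    obtain ⟨p1, p2, hp1, hp2, hp3⟩ := null_param (a1 + I*u1) (a2 + I*u2) (a3 + I*u3)
      (by linear_combination h1 + 2*I*h2 + (u1^2 + u2^2 + u3^2) * Complex.I_sq)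
    obtain ⟨q1, q2, hq1, hq2, hq3⟩ := null_param (a1 - I*u1) (a2 - I*u2) (a3 - I*u3)
      (by linear_combination h1 - 2*I*h2 + (u1^2 + u2^2 + u3^2) * Complex.I_sq)
    refine ⟨![(p1+q1)/2, (p2+q2)/2, (q1-p1)/2, (q2-p2)/2], ?_⟩
    have hv : v = ((v.1, v.2) : (Fin 3 → ℂ) × (Fin 3 → ℂ)) := rfl
    rw [hv]
    unfold phi
    refine Prod.ext ?_ ?_ <;> funext j <;> fin_cases j <;>
      simp only [a1, a2, a3, u1, u2, u3, Fin.zero_eta, Fin.mk_one, Matrix.cons_val_zero,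
        Matrix.cons_val_one, Matrix.head_cons, Matrix.cons_val_two, Matrix.tail_cons,
        Fin.isValue, Matrix.cons_val_three, show (⟨2, by norm_num⟩ : Fin 3) = 2 from rfl]
    · linear_combination (-I/4) * (hp1 + hp2 + hq1 + hq2) - a1 * Complex.I_sq
    · linear_combination (hp1 - hp2 + hq1 - hq2)/4
    · linear_combination (hp3 + hq3)/2
    · linear_combination (hq1 + hq2 - hp1 - hp2)/4 - u1 * Complex.I_sq
    · linear_combination (I/4) * (hq1 - hq2 - hp1 + hp2) - u2 * Complex.I_sq
    · linear_combination (I/2) * (hq3 - hp3) - u3 * Complex.I_sq
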